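/- The only prime ideal of R = Z/4[x_1,…,x_l]/(x_1^2−1,…,x_l^2−1) is the image of the ideal (2, x_1−1,…,x_l−1); in particular, R is a local ring with residue field F_2. -/

import Mathlib

open MvPolynomial

section Aux

variable (l : ℕ)

private abbrev S' (l : ℕ) := MvPolynomial (Fin l) (ZMod 4)

private noncomputable def φ' (l : ℕ) : S' l →+* ZMod 2 :=
  eval₂Hom (ZMod.castHom (show (2:ℕ) ∣ 4 by norm_num) (ZMod 2)) (fun _ => 1)

private lemma sub_C_eval_mem (p : S' l) :
    p - C (eval (fun _ => (1 : ZMod 4)) p) ∈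
      Ideal.span (Set.range fun i : Fin l => (X i : S' l) - 1) := by
  set J := Ideal.span (Set.range fun i : Fin l => (X i : S' l) - 1) with hJ
  induction p using MvPolynomial.induction_on with
  | C a => simp
  | add p q hp hq =>
      have := J.add_mem hp hq
      simpa [sub_add_sub_comm] using this
  | mul_X p i hp =>
      have h1 : (X i : S' l) - 1 ∈ J := by
        exact Ideal.subset_span ⟨i, rfl⟩
      have h2 : p * ((X i : S' l) - 1) ∈ J := J.mul_mem_left p h1
      have := J.add_mem h2 hp
      have heq : p * ((X i : S' l) - 1) + (p - C (eval (fun _ => (1:ZMod 4)) p)) =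
          p * X i - C (eval (fun _ => (1:ZMod 4)) (p * X i)) := by
        simp only [eval_mul, eval_X, mul_one, mul_sub, mul_one]
        ring
      rwa [heq] at this

private lemma ker_phi (l : ℕ) :
    RingHom.ker (φ' l) = Ideal.span ({(2 : S' l)} ∪
      Set.range fun i : Fin l => (X i : S' l) - 1) := by
  set P := Ideal.span ({(2 : S' l)} ∪
      Set.range fun i : Fin l => (X i : S' l) - 1) with hP
  apply le_antisymm
  · intro p hp
    have hker : φ' l p = 0 := hp
    have hphi : φ' l p = ZMod.castHom (show (2:ℕ) ∣ 4 by norm_num) (ZMod 2)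
        (eval (fun _ => (1 : ZMod 4)) p) := by
      have h := MvPolynomial.eval₂_comp_left
        (ZMod.castHom (show (2:ℕ) ∣ 4 by norm_num) (ZMod 2)) (RingHom.id (ZMod 4))
        (fun _ : Fin l => (1 : ZMod 4)) p
      simp only [RingHom.comp_id, Function.comp, map_one] at h
      have : eval (fun _ => (1 : ZMod 4)) p = eval₂ (RingHom.id (ZMod 4)) (fun _ => 1) p := rfl
      rw [this]
      exact h.symm
    set c := eval (fun _ => (1 : ZMod 4)) p with hc
    have hc2 : c = 0 ∨ c = 2 := by
      rw [hphi] at hker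
      have key : ∀ c : ZMod 4,
          ZMod.castHom (show (2:ℕ) ∣ 4 by norm_num) (ZMod 2) c = 0 → c = 0 ∨ c = 2 := by decide
      exact key c hker
    have hCc : C c ∈ P := by
      rcases hc2 with h | h
      · simp [h]
      · rw [h]
        have : (C (2 : ZMod 4) : S' l) = 2 := by simp [map_ofNat]
        rw [this]
        exact Ideal.subset_span (Or.inl rfl)
    have hsub : p - C c ∈ P := by
      refine Ideal.span_mono ?_ (sub_C_eval_mem l p)
      exact Set.subset_union_right
    simpa using P.add_mem hsub hCc
  · rw [Ideal.span_le]
    rintro x (rfl | ⟨i, rfl⟩)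
    · show φ' l 2 = 0
      simp only [φ', map_ofNat, coe_eval₂Hom]
      decide
    · show φ' l (X i - 1) = 0
      simp [φ']

private lemma pow_four (l : ℕ) (i : Fin l) :
    ((X i : S' l) - 1) ^ 4 = ((X i : S' l) ^ 2 - 1) ^ 2 := by
  have h4 : (4 : S' l) = 0 := by
    rw [← map_ofNat (C : ZMod 4 →+* S' l) 4, show (4 : ZMod 4) = 0 from rfl, map_zero]
  linear_combination (-(X i : S' l) ^ 3 + 2 * (X i) ^ 2 - X i) * h4

end Aux

/-- The only prime ideal of `Z/4[x₁,…,x_l]/(x₁²−1,…,x_l²−1)` is the image of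
`(2, x₁−1,…,x_l−1)`; in particular the quotient is local with residue field `F₂`. -/
theorem unique_prime_ideal_zmod4_quotient (l : ℕ) :
    let I : Ideal (MvPolynomial (Fin l) (ZMod 4)) :=
      Ideal.span (Set.range fun i : Fin l => (X i : MvPolynomial (Fin l) (ZMod 4)) ^ 2 - 1)
    let P : Ideal (MvPolynomial (Fin l) (ZMod 4)) :=
      Ideal.span ({(2 : MvPolynomial (Fin l) (ZMod 4))} ∪
        Set.range fun i : Fin l => (X i : MvPolynomial (Fin l) (ZMod 4)) - 1)
    (∀ Q : Ideal (MvPolynomial (Fin l) (ZMod 4) ⧸ I), Q.IsPrime →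
        Q = P.map (Ideal.Quotient.mk I)) ∧
      IsLocalRing (MvPolynomial (Fin l) (ZMod 4) ⧸ I) ∧
      Nonempty ((MvPolynomial (Fin l) (ZMod 4) ⧸ I) ⧸ P.map (Ideal.Quotient.mk I) ≃+* ZMod 2) := by
  intro I P
  have hIP : I ≤ P := by
    rw [Ideal.span_le]
    rintro x ⟨i, rfl⟩
    have h1 : (X i : S' l) - 1 ∈ P := Ideal.subset_span (Or.inr ⟨i, rfl⟩)
    have h2 : ((X i : S' l) - 1) * (X i + 1) ∈ P := P.mul_mem_right _ h1
    have : ((X i : S' l) - 1) * (X i + 1) = (X i) ^ 2 - 1 := by ring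
    rwa [this] at h2
  have hsurj : Function.Surjective (φ' l) := by
    intro x
    fin_cases x
    · exact ⟨0, map_zero _⟩
    · exact ⟨1, map_one _⟩
  have hker : RingHom.ker (φ' l) = P := ker_phi l
  let e1 : (S' l ⧸ P) ≃+* ZMod 2 :=
    (Ideal.quotEquivOfEq hker.symm).trans (RingHom.quotientKerEquivOfSurjective hsurj)
  let e2 : ((S' l ⧸ I) ⧸ P.map (Ideal.Quotient.mk I)) ≃+* (S' l ⧸ P) :=
    (DoubleQuot.quotQuotEquivQuotSup I P).trans (Ideal.quotEquivOfEq (sup_eq_right.mpr hIP))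
  let e : ((S' l ⧸ I) ⧸ P.map (Ideal.Quotient.mk I)) ≃+* ZMod 2 := e2.trans e1
  have hfield : IsField ((S' l ⧸ I) ⧸ P.map (Ideal.Quotient.mk I)) :=
    MulEquiv.isField (Field.toIsField (ZMod 2)) e.toMulEquiv
  have hmax : (P.map (Ideal.Quotient.mk I)).IsMaximal :=
    Ideal.Quotient.maximal_of_isField _ hfield
  have huniq : ∀ Q : Ideal (S' l ⧸ I), Q.IsPrime → Q = P.map (Ideal.Quotient.mk I) := by
    intro Q hQ
    have hle : P.map (Ideal.Quotient.mk I) ≤ Q := by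
      rw [Ideal.map_span, Ideal.span_le]
      rintro x ⟨y, (rfl | ⟨i, rfl⟩), rfl⟩
      · refine hQ.mem_of_pow_mem 2 ?_
        have : ((Ideal.Quotient.mk I) 2) ^ 2 = 0 := by
          rw [← map_pow]
          have : (2 : S' l) ^ 2 = 4 := by norm_num
          rw [this]
          have h4 : (4 : S' l) = 0 := by
            rw [← map_ofNat (C : ZMod 4 →+* S' l) 4, show (4 : ZMod 4) = 0 from rfl, map_zero]
          rw [h4, map_zero]
        rw [this]; exact Q.zero_mem
      · refine hQ.mem_of_pow_mem 4 ?_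
        have : ((Ideal.Quotient.mk I) ((X i : S' l) - 1)) ^ 4 = 0 := by
          rw [← map_pow, pow_four l i, Ideal.Quotient.eq_zero_iff_mem]
          exact Ideal.pow_mem_of_mem I (Ideal.subset_span ⟨i, rfl⟩) 2 two_pos
        rw [this]; exact Q.zero_mem
    exact (hmax.eq_of_le hQ.ne_top hle).symm
  exact ⟨huniq,
    IsLocalRing.of_unique_max_ideal
      ⟨P.map (Ideal.Quotient.mk I), hmax, fun J hJ => huniq J hJ.isPrime⟩, ⟨e⟩⟩
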